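/- Let (x_j)_{j∈J} be a finite frame for ℝ^n, let x∈ℝ^n, λ>0 and C>0. Then the following are equivalent: (1) there exists an open set U containing x such that ‖y−z‖ ≤ C (Σ_{j∈J} (φ_λ(⟨y,x_j⟩) − φ_λ(⟨z,x_j⟩))²)^{1/2} for all y,z∈U (i.e., (x_j)_{j∈J} does C-stable λ-saturation recovery on an open set containing x); (2) the subfamily (x_j)_{j∈J_λ^♯(x)}, with J_λ^♯(x)={j∈J : |⟨x,x_j⟩|<λ}, satisfies C^{−2}‖y‖² ≤ Σ_{j∈J_λ^♯(x)} ⟨y,x_j⟩² for all y∈ℝ^n (i.e., it is a frame of ℝ^n with lower frame bound C^{−2}). -/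

import Mathlib

local notation "⟪" x ", " y "⟫" => @inner ℝ _ _ x y

/-- The saturation function `φ_λ`: `φ_λ(t) = t` if `|t| ≤ λ` and `φ_λ(t) = sign(t)·λ` else. -/
noncomputable def satur (l t : ℝ) : ℝ := max (-l) (min l t)

lemma satur_eq_self {l t : ℝ} (h : |t| ≤ l) : satur l t = t := by
  obtain ⟨h1, h2⟩ := abs_le.mp h
  rw [satur, min_eq_right h2, max_eq_right h1]

lemma satur_eq_pos {l t : ℝ} (hl : 0 ≤ l) (h : l ≤ t) : satur l t = l := by
  rw [satur, min_eq_left h, max_eq_right (neg_le_self hl)]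

lemma satur_eq_neg {l t : ℝ} (hl : 0 ≤ l) (h : t ≤ -l) : satur l t = -l := by
  rw [satur, min_eq_right (h.trans (neg_le_self hl)), max_eq_left h]

lemma abs_satur_sub_le (l a b : ℝ) : |satur l a - satur l b| ≤ |a - b| := by
  have h1 : |satur l a - satur l b| = |max (min l a) (-l) - max (min l b) (-l)| := by
    rw [satur, satur, max_comm, max_comm (-l)]
  have h2 : |min l a - min l b| ≤ max |l - l| |a - b| := abs_min_sub_min_le_max l a l b
  rw [h1]
  refine (abs_max_sub_max_le_abs _ _ _).trans ?_
  simpa using h2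

set_option maxHeartbeats 1000000 in
theorem local_stable_recovery_iff_lower_frame_bound
    {n : ℕ} {J : Type*} [Fintype J] (xv : J → EuclideanSpace ℝ (Fin n))
    (hframe : Submodule.span ℝ (Set.range xv) = ⊤)
    (x : EuclideanSpace ℝ (Fin n)) (lam C : ℝ) (hlam : 0 < lam) (hC : 0 < C) :
    (∃ U : Set (EuclideanSpace ℝ (Fin n)), IsOpen U ∧ x ∈ U ∧
        ∀ y ∈ U, ∀ z ∈ U,
          ‖y - z‖ ≤ C * Real.sqrt (∑ j, (satur lam ⟪y, xv j⟫ - satur lam ⟪z, xv j⟫) ^ 2)) ↔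
      ∀ y : EuclideanSpace ℝ (Fin n),
        C⁻¹ ^ 2 * ‖y‖ ^ 2 ≤
          ∑ j ∈ Finset.univ.filter (fun j : J => |⟪x, xv j⟫| < lam), ⟪y, xv j⟫ ^ 2 := by
  set S : Finset J := Finset.univ.filter (fun j : J => |⟪x, xv j⟫| < lam) with hS
  constructor
  · -- forward direction
    rintro ⟨U, hUopen, hxU, hrec⟩ y
    by_cases hy : y = 0
    · have : ‖y‖ = 0 := by simp [hy]
      rw [this]
      have : (0:ℝ) ≤ ∑ j ∈ S, ⟪y, xv j⟫ ^ 2 := Finset.sum_nonneg fun j _ => sq_nonneg _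
      nlinarith
    have hy' : (0:ℝ) < ‖y‖ := norm_pos_iff.mpr hy
    -- Step 1: choose s > 0
    have e1 : ∀ᶠ s : ℝ in nhds 0, x + s • x ∈ U := by
      have hcont : Filter.Tendsto (fun s : ℝ => x + s • x) (nhds 0) (nhds x) := by
        have h0 := (Filter.tendsto_id.smul_const x).const_add x
          (x := nhds (0:ℝ))
        simpa using h0
      exact hcont (hUopen.mem_nhds hxU)
    have e2 : ∀ᶠ s : ℝ in nhds 0, ∀ j, |⟪x, xv j⟫| < lam → (1 + s) * |⟪x, xv j⟫| < lam := by
      rw [Filter.eventually_all]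
      intro j
      by_cases hj : |⟪x, xv j⟫| < lam
      · have hcont : Filter.Tendsto (fun s : ℝ => (1 + s) * |⟪x, xv j⟫|) (nhds 0)
            (nhds |⟪x, xv j⟫|) := by
          have h0 := Filter.Tendsto.mul_const (a := (1:ℝ))
            (f := fun s : ℝ => 1 + s) (x := nhds (0:ℝ)) |⟪x, xv j⟫|
            (by
              have : Filter.Tendsto (fun s : ℝ => 1 + s) (nhds 0) (nhds (1 + 0)) :=
                (continuous_const.add continuous_id).tendsto 0
              simpa using this)
          simpa using h0
        filter_upwards [hcont.eventually_lt_const hj] with s hs _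
        exact hs
      · filter_upwards with s hcontr; exact absurd hcontr hj
    obtain ⟨s, ⟨hpU, hsS⟩, hs0⟩ :=
      (((e1.and e2).filter_mono nhdsWithin_le_nhds).and
        (self_mem_nhdsWithin : Set.Ioi (0:ℝ) ∈ nhdsWithin (0:ℝ) (Set.Ioi 0))).exists
    set p := x + s • x with hp
    -- Step 2: choose t > 0
    have f1 : ∀ᶠ t : ℝ in nhds 0, p + t • y ∈ U := by
      have hcont : Filter.Tendsto (fun t : ℝ => p + t • y) (nhds 0) (nhds p) := by
        have h0 := (Filter.tendsto_id.smul_const y).const_add p (x := nhds (0:ℝ))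
        simpa using h0
      exact hcont (hUopen.mem_nhds hpU)
    have f2 : ∀ᶠ t : ℝ in nhds 0, ∀ j, t * |⟪y, xv j⟫| < s * lam := by
      rw [Filter.eventually_all]
      intro j
      have hcont : Filter.Tendsto (fun t : ℝ => t * |⟪y, xv j⟫|) (nhds 0) (nhds 0) := by
        have h0 := Filter.Tendsto.mul_const (a := (0:ℝ)) (f := fun t : ℝ => t)
          (x := nhds (0:ℝ)) |⟪y, xv j⟫| Filter.tendsto_id
        simpa using h0
      exact hcont.eventually_lt_const (by positivity)
    obtain ⟨t, ⟨hqU, htS⟩, ht0⟩ :=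
      (((f1.and f2).filter_mono nhdsWithin_le_nhds).and
        (self_mem_nhdsWithin : Set.Ioi (0:ℝ) ∈ nhdsWithin (0:ℝ) (Set.Ioi 0))).exists
    set q := p + t • y with hq
    have hpinner : ∀ j, ⟪p, xv j⟫ = (1 + s) * ⟪x, xv j⟫ := by
      intro j
      rw [hp, inner_add_left, real_inner_smul_left]; ring
    have hqinner : ∀ j, ⟪q, xv j⟫ = ⟪p, xv j⟫ + t * ⟪y, xv j⟫ := by
      intro j
      rw [hq, inner_add_left, real_inner_smul_left]
    -- key pointwise bound
    have key : ∀ j, (satur lam ⟪p, xv j⟫ - satur lam ⟪q, xv j⟫) ^ 2 ≤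
        (if |⟪x, xv j⟫| < lam then t ^ 2 * ⟪y, xv j⟫ ^ 2 else 0) := by
      intro j
      by_cases hj : |⟪x, xv j⟫| < lam
      · rw [if_pos hj]
        have hlip := abs_satur_sub_le lam ⟪p, xv j⟫ ⟪q, xv j⟫
        have hdiff : |⟪p, xv j⟫ - ⟪q, xv j⟫| = |t * ⟪y, xv j⟫| := by
          rw [hqinner]; rw [show ⟪p, xv j⟫ - (⟪p, xv j⟫ + t * ⟪y, xv j⟫) = -(t * ⟪y, xv j⟫) by ring,
            abs_neg]
        rw [hdiff] at hlip
        calc (satur lam ⟪p, xv j⟫ - satur lam ⟪q, xv j⟫) ^ 2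
            = |satur lam ⟪p, xv j⟫ - satur lam ⟪q, xv j⟫| ^ 2 := (sq_abs _).symm
          _ ≤ |t * ⟪y, xv j⟫| ^ 2 := by
              exact pow_le_pow_left₀ (abs_nonneg _) hlip 2
          _ = t ^ 2 * ⟪y, xv j⟫ ^ 2 := by rw [sq_abs]; ring
      · rw [if_neg hj]
        push_neg at hj
        have htj := htS j
        have hny : -|⟪y, xv j⟫| ≤ ⟪y, xv j⟫ := neg_abs_le _
        have hyab : ⟪y, xv j⟫ ≤ |⟪y, xv j⟫| := le_abs_self _
        rcases le_or_gt 0 ⟪x, xv j⟫ with hc | hc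
        · have hcl : lam ≤ ⟪x, xv j⟫ := by rwa [abs_of_nonneg hc] at hj
          have h1 : lam ≤ ⟪p, xv j⟫ := by rw [hpinner]; nlinarith
          have h2 : lam ≤ ⟪q, xv j⟫ := by rw [hqinner, hpinner]; nlinarith
          rw [satur_eq_pos hlam.le h1, satur_eq_pos hlam.le h2]
          simp
        · have hcl : ⟪x, xv j⟫ ≤ -lam := by
            rw [abs_of_neg hc] at hj; linarith
          have h1 : ⟪p, xv j⟫ ≤ -lam := by rw [hpinner]; nlinarith
          have h2 : ⟪q, xv j⟫ ≤ -lam := by rw [hqinner, hpinner]; nlinarith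
          rw [satur_eq_neg hlam.le h1, satur_eq_neg hlam.le h2]
          simp
    have sumle : ∑ j, (satur lam ⟪p, xv j⟫ - satur lam ⟪q, xv j⟫) ^ 2 ≤
        t ^ 2 * ∑ j ∈ S, ⟪y, xv j⟫ ^ 2 := by
      calc ∑ j, (satur lam ⟪p, xv j⟫ - satur lam ⟪q, xv j⟫) ^ 2
          ≤ ∑ j, (if |⟪x, xv j⟫| < lam then t ^ 2 * ⟪y, xv j⟫ ^ 2 else 0) :=
            Finset.sum_le_sum fun j _ => key j
        _ = ∑ j ∈ S, t ^ 2 * ⟪y, xv j⟫ ^ 2 := (Finset.sum_filter _ _).symm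
        _ = t ^ 2 * ∑ j ∈ S, ⟪y, xv j⟫ ^ 2 := by rw [Finset.mul_sum]
    have hnormpq : ‖p - q‖ = t * ‖y‖ := by
      rw [hq, show p - (p + t • y) = -(t • y) by abel, norm_neg, norm_smul,
        Real.norm_eq_abs, abs_of_pos ht0]
    have hrecpq := hrec p hpU q hqU
    rw [hnormpq] at hrecpq
    set T := ∑ j ∈ S, ⟪y, xv j⟫ ^ 2 with hT
    have hTnn : (0:ℝ) ≤ T := Finset.sum_nonneg fun j _ => sq_nonneg _
    have hstep : t * ‖y‖ ≤ C * (t * Real.sqrt T) := by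
      refine hrecpq.trans ?_
      have := Real.sqrt_le_sqrt sumle
      refine (mul_le_mul_of_nonneg_left this hC.le).trans_eq ?_
      rw [show t ^ 2 * T = (t) ^ 2 * T by ring, Real.sqrt_mul (sq_nonneg t),
        Real.sqrt_sq ht0.le]
    have hyl : ‖y‖ ≤ C * Real.sqrt T := by
      have h' : t * ‖y‖ ≤ t * (C * Real.sqrt T) := by linarith [hstep]
      exact le_of_mul_le_mul_left h' ht0
    rw [inv_pow, inv_mul_le_iff₀ (by positivity)]
    nlinarith [Real.sq_sqrt hTnn, Real.sqrt_nonneg T, norm_nonneg y, hyl, hC]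
  · -- reverse direction
    intro h
    obtain ⟨ε, hε0, hε⟩ : ∃ ε > 0, ∀ j ∈ S, ε * (‖xv j‖ + 1) ≤ lam - |⟪x, xv j⟫| := by
      rcases S.eq_empty_or_nonempty with hemp | hne
      · exact ⟨1, one_pos, by simp [hemp]⟩
      · refine ⟨S.inf' hne fun j => (lam - |⟪x, xv j⟫|) / (‖xv j‖ + 1), ?_, ?_⟩
        · rw [gt_iff_lt, Finset.lt_inf'_iff]
          intro j hj
          have hj' : |⟪x, xv j⟫| < lam := (Finset.mem_filter.mp hj).2
          have : (0:ℝ) < ‖xv j‖ + 1 := by positivity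
          exact div_pos (by linarith) this
        · intro j hj
          have hle := Finset.inf'_le (fun j => (lam - |⟪x, xv j⟫|) / (‖xv j‖ + 1)) hj
          have hpos : (0:ℝ) < ‖xv j‖ + 1 := by positivity
          calc S.inf' hne (fun j => (lam - |⟪x, xv j⟫|) / (‖xv j‖ + 1)) * (‖xv j‖ + 1)
              ≤ (lam - |⟪x, xv j⟫|) / (‖xv j‖ + 1) * (‖xv j‖ + 1) :=
                mul_le_mul_of_nonneg_right hle hpos.le
            _ = lam - |⟪x, xv j⟫| := div_mul_cancel₀ _ hpos.ne'
    refine ⟨Metric.ball x ε, Metric.isOpen_ball, Metric.mem_ball_self hε0, ?_⟩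
    intro y hy z hz
    have hin : ∀ w ∈ Metric.ball x ε, ∀ j ∈ S, |⟪w, xv j⟫| ≤ lam := by
      intro w hw j hj
      have hwx : ‖w - x‖ < ε := by rwa [Metric.mem_ball, dist_eq_norm] at hw
      have hcs : |⟪w - x, xv j⟫| ≤ ‖w - x‖ * ‖xv j‖ := abs_real_inner_le_norm _ _
      have h2 : ‖w - x‖ * ‖xv j‖ ≤ ε * (‖xv j‖ + 1) := by
        have := hwx.le
        nlinarith [norm_nonneg (xv j), norm_nonneg (w - x), hε0]
      have hεj := hε j hj
      have hsplit : ⟪w, xv j⟫ = ⟪x, xv j⟫ + ⟪w - x, xv j⟫ := by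
        rw [inner_sub_left]; ring
      calc |⟪w, xv j⟫| = |⟪x, xv j⟫ + ⟪w - x, xv j⟫| := by rw [hsplit]
        _ ≤ |⟪x, xv j⟫| + |⟪w - x, xv j⟫| := abs_add_le _ _
        _ ≤ |⟪x, xv j⟫| + (lam - |⟪x, xv j⟫|) := by
            have := hcs.trans (h2.trans hεj)
            linarith
        _ = lam := by ring
    have heq : ∀ j ∈ S, satur lam ⟪y, xv j⟫ - satur lam ⟪z, xv j⟫ = ⟪y - z, xv j⟫ := by
      intro j hj
      rw [satur_eq_self (hin y hy j hj), satur_eq_self (hin z hz j hj), inner_sub_left]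
    have hlow := h (y - z)
    set T := ∑ j, (satur lam ⟪y, xv j⟫ - satur lam ⟪z, xv j⟫) ^ 2 with hT
    have hmono : ∑ j ∈ S, ⟪y - z, xv j⟫ ^ 2 ≤ T := by
      calc ∑ j ∈ S, ⟪y - z, xv j⟫ ^ 2
          = ∑ j ∈ S, (satur lam ⟪y, xv j⟫ - satur lam ⟪z, xv j⟫) ^ 2 :=
            Finset.sum_congr rfl fun j hj => by rw [heq j hj]
        _ ≤ T := Finset.sum_le_sum_of_subset_of_nonneg (Finset.filter_subset _ _)
            fun j _ _ => sq_nonneg _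
    have hfull : C⁻¹ ^ 2 * ‖y - z‖ ^ 2 ≤ T := le_trans hlow hmono
    have h1 : C⁻¹ * ‖y - z‖ ≤ Real.sqrt T := by
      rw [show C⁻¹ * ‖y - z‖ = Real.sqrt ((C⁻¹ * ‖y - z‖) ^ 2) from
        (Real.sqrt_sq (by positivity)).symm]
      apply Real.sqrt_le_sqrt
      calc (C⁻¹ * ‖y - z‖) ^ 2 = C⁻¹ ^ 2 * ‖y - z‖ ^ 2 := by ring
        _ ≤ T := hfull
    calc ‖y - z‖ = C * (C⁻¹ * ‖y - z‖) := by field_simp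
      _ ≤ C * Real.sqrt T := mul_le_mul_of_nonneg_left h1 hC.le
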